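/- Let n, m, k be positive integers and let G' be a graph with k ≥ 2n + td(G') + td(P_m × P_n). Let G be a graph obtained from the disjoint union of G' and the broom B_{n,m,k} by adding some edges between V(G') and {(i,1) : 1 ≤ i ≤ n}. Suppose T is an optimal treedepth decomposition of G and d ≥ 1 is an integer such that: (1) there exists some 1 ≤ j ≤ m with top(T,d) ∩ {(i,j) : 1 ≤ i ≤ n} = ∅; and (2) for every 1 ≤ i ≤ n, the set V_i consisting of {(i,j) : 1 ≤ j ≤ m} together with the vertices of the path on 2^k − 1 vertices attached to (i,m) contains at least one vertex of top(T,d). Then d ≥ n. -/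

import Mathlib

open SimpleGraph

attribute [local instance] Classical.propDecidable

noncomputable section

/-- A rooted forest on a vertex type `V`, given by a parent map together with a
depth function (the depth of a root is `1`, and the depth of a child is the depth
of its parent plus one).  The existence of such a depth function guarantees that
the parent map is acyclic, i.e. that the structure really is a rooted forest. -/
structure RootedForest (V : Type) where
  parent : V → Option V
  depth : V → ℕ
  depth_root : ∀ v, parent v = none → depth v = 1
  depth_parent : ∀ v u, parent v = some u → depth v = depth u + 1

namespace RootedForest

variable {V : Type}

/-- `T.Ancestor u v` means that `u` is a (reflexive) ancestor of `v` in `T`. -/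
def Ancestor (T : RootedForest V) (u v : V) : Prop :=
  Relation.ReflTransGen (fun a b => T.parent a = some b) v u

/-- The height of a rooted forest: the maximum number of vertices on a
root-to-leaf path of one of its trees (0 for the empty forest). -/
def height (T : RootedForest V) [Fintype V] : ℕ :=
  Finset.univ.sup T.depth

/-- The number of children of a vertex. -/
def childCount (T : RootedForest V) [Fintype V] (u : V) : ℕ :=
  (Finset.univ.filter (fun v => T.parent v = some u)).card

/-- The set of vertices of depth at most `d` in `T`. -/
def top (T : RootedForest V) (d : ℕ) : Set V := {v | T.depth v ≤ d}

/-- `T` is a rooted tree if it has exactly one root. -/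
def IsTree (T : RootedForest V) : Prop := ∃! r, T.parent r = none

/-- The top separator of a rooted tree `T`: if no vertex of `T` has more than one
child (i.e. `T` is a path), it is all of `V(T)`; otherwise it is the set of
vertices of depth at most the depth of the minimum-depth vertex having more than
one child. -/
def topSep (T : RootedForest V) [Fintype V] : Finset V :=
  if _ : ∃ p, 2 ≤ T.childCount p then
    Finset.univ.filter
      (fun v => T.depth v ≤ sInf {d | ∃ p, 2 ≤ T.childCount p ∧ T.depth p = d})
  else Finset.univ

end RootedForest

/-- `T` is a treedepth decomposition of `G`: a rooted forest on the vertex set of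
`G` such that the endpoints of every edge of `G` are in ancestor-descendant
relation. -/
def IsTDDecomp {V : Type} (G : SimpleGraph V) (T : RootedForest V) : Prop :=
  ∀ u v, G.Adj u v → T.Ancestor u v ∨ T.Ancestor v u

/-- The treedepth of a finite graph: the minimum height of a treedepth
decomposition of `G`. -/
def treedepth {V : Type} [Fintype V] (G : SimpleGraph V) : ℕ :=
  sInf {h | ∃ T : RootedForest V, IsTDDecomp G T ∧ T.height = h}

/-- `(T, f)` is a tree decomposition of `G`. -/
def IsTreeDecomp {V ι : Type} (G : SimpleGraph V) (T : SimpleGraph ι)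
    (f : ι → Finset V) : Prop :=
  T.IsTree ∧
  (∀ v, ∃ i, v ∈ f i) ∧
  (∀ u v, G.Adj u v → ∃ i, u ∈ f i ∧ v ∈ f i) ∧
  (∀ v, (T.induce {i | v ∈ f i}).Connected)

/-- The treewidth of a finite graph: the minimum over all tree decompositions of
(maximum bag size minus one), phrased as the least `w` such that `G` has a tree
decomposition all of whose bags have at most `w + 1` vertices. -/
def treewidth {V : Type} [Fintype V] (G : SimpleGraph V) : ℕ :=
  sInf {w | ∃ (ι : Type) (_ : Fintype ι) (T : SimpleGraph ι) (f : ι → Finset V),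
    IsTreeDecomp G T f ∧ ∀ i, (f i).card ≤ w + 1}

/-- `S` is an `a`-`b` separator of `G`: `a, b ∉ S` and every walk from `a` to `b`
meets `S` (i.e. `a` and `b` lie in different connected components of `G ∖ S`). -/
def IsABSep {V : Type} (G : SimpleGraph V) (a b : V) (S : Finset V) : Prop :=
  a ∉ S ∧ b ∉ S ∧ ∀ w : G.Walk a b, ∃ x ∈ w.support, x ∈ S

/-- `S` is a minimal separator of `G`: for some vertices `a, b`, it is an
`a`-`b` separator no proper subset of which is an `a`-`b` separator. -/
def IsMinSep {V : Type} (G : SimpleGraph V) (S : Finset V) : Prop :=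
  ∃ a b, IsABSep G a b S ∧ ∀ S' ⊂ S, ¬ IsABSep G a b S'

/-- The grid graph `P_m × P_n`, with vertex set
`{(i,j) : 1 ≤ i ≤ n, 1 ≤ j ≤ m}` and edges between vertices at ℓ1-distance 1. -/
def gridGraph (n m : ℕ) : SimpleGraph (Fin n × Fin m) where
  Adj a b := Nat.dist a.1.val b.1.val + Nat.dist a.2.val b.2.val = 1
  symm := by
    constructor
    intro a b h
    beta_reduce at h ⊢
    rwa [Nat.dist_comm b.1.val, Nat.dist_comm b.2.val]
  loopless := by constructor; intro a h; simp [Nat.dist_self] at h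


/-- Vertices of the broom: grid vertices plus, for each row `i`, a path on `2^k - 1` vertices. -/
abbrev BroomV (n m k : ℕ) : Type := (Fin n × Fin m) ⊕ (Fin n × Fin (2 ^ k - 1))

/-- The broom `B_{n,m,k}`. -/
def broom (n m k : ℕ) : SimpleGraph (BroomV n m k) :=
  SimpleGraph.fromRel (fun x y =>
    match x, y with
    | .inl a, .inl b => (gridGraph n m).Adj a b
    | .inl a, .inr b => a.1 = b.1 ∧ a.2.val = m - 1 ∧ b.2.val = 0
    | .inr a, .inr b => a.1 = b.1 ∧ a.2.val + 1 = b.2.val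
    | .inr _, .inl _ => False)

/-- Vertices of the double broom: grid vertices plus, for each row `i`, a path
attached at `(i,1)` (first summand) and a path attached at `(i,m)` (second summand). -/
abbrev DBroomV (n m k : ℕ) : Type :=
  (Fin n × Fin m) ⊕ (Fin n × Fin (2 ^ k - 1)) ⊕ (Fin n × Fin (2 ^ k - 1))

/-- The double broom `D_{n,m,k}`. -/
def dbroom (n m k : ℕ) : SimpleGraph (DBroomV n m k) :=
  SimpleGraph.fromRel (fun x y =>
    match x, y with
    | .inl a, .inl b => (gridGraph n m).Adj a b
    | .inl a, .inr (.inl b) => a.1 = b.1 ∧ a.2.val = 0 ∧ b.2.val = 0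
    | .inl a, .inr (.inr b) => a.1 = b.1 ∧ a.2.val = m - 1 ∧ b.2.val = 0
    | .inr (.inl a), .inr (.inl b) => a.1 = b.1 ∧ a.2.val + 1 = b.2.val
    | .inr (.inr a), .inr (.inr b) => a.1 = b.1 ∧ a.2.val + 1 = b.2.val
    | _, _ => False)

/-- Vertices of the graph `G_{n,m,k,l}`: grid vertices, plus a path on `2^k - 1`
vertices for every triple (row `i`, end `e ∈ {1,m}`, vertex `w ∈ W`), plus the
set `W` of `l` new vertices. -/
abbrev CornerV (n m k l : ℕ) : Type :=
  (Fin n × Fin m) ⊕ ((Fin n × Fin 2 × Fin l) × Fin (2 ^ k - 1)) ⊕ Fin l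

/-- The graph `G_{n,m,k,l}`. -/
def corner (n m k l : ℕ) : SimpleGraph (CornerV n m k l) :=
  SimpleGraph.fromRel (fun x y =>
    match x, y with
    | .inl a, .inl b => (gridGraph n m).Adj a b
    | .inl a, .inr (.inl (⟨i, e, _⟩, t)) =>
        a.1 = i ∧ t.val = 0 ∧
          ((e.val = 0 ∧ a.2.val = 0) ∨ (e.val = 1 ∧ a.2.val = m - 1))
    | .inr (.inl (p, t)), .inr (.inl (q, s)) => p = q ∧ t.val + 1 = s.val
    | .inr (.inl (⟨_, _, w⟩, t)), .inr (.inr w') => w = w' ∧ t.val = 2 ^ k - 2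
    | _, _ => False)

/-- `H` is a minor of `G`: there are pairwise disjoint connected branch sets in
`G`, one for each vertex of `H`, such that adjacent vertices of `H` have
adjacent branch sets. -/
def IsMinor {W V : Type} (H : SimpleGraph W) (G : SimpleGraph V) : Prop :=
  ∃ B : W → Set V,
    (∀ w, (G.induce (B w)).Connected) ∧
    (∀ w w', w ≠ w' → Disjoint (B w) (B w')) ∧
    (∀ w w', H.Adj w w' → ∃ u ∈ B w, ∃ v ∈ B w', G.Adj u v)

/-- A graph is chordal if it has no induced cycle of length four or more. -/
def IsChordal {V : Type} (G : SimpleGraph V) : Prop :=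
  ∀ c : ℕ, 4 ≤ c → IsEmpty (SimpleGraph.cycleGraph c ↪g G)

/-- A graph is a cograph if it has no induced path on four vertices. -/
def IsCograph {V : Type} (G : SimpleGraph V) : Prop :=
  IsEmpty (SimpleGraph.pathGraph 4 ↪g G)

/-- A graph is outerplanar iff it contains neither `K₄` nor `K_{2,3}` as a minor. -/
def IsOuterplanar {V : Type} (G : SimpleGraph V) : Prop :=
  ¬ IsMinor (⊤ : SimpleGraph (Fin 4)) G ∧
  ¬ IsMinor (completeBipartiteGraph (Fin 2) (Fin 3)) G

/-- The graph obtained from `G'` and the path on `p` vertices by adding a single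
edge between `u ∈ V(G')` and a path vertex `v`. -/
def attachPath {V' : Type} (G' : SimpleGraph V') (p : ℕ) (u : V') (v : Fin p) :
    SimpleGraph (V' ⊕ Fin p) :=
  SimpleGraph.fromRel (fun x y =>
    match x, y with
    | .inl a, .inl b => G'.Adj a b
    | .inr a, .inr b => a.val + 1 = b.val
    | .inl a, .inr b => a = u ∧ b = v
    | .inr _, .inl _ => False)


namespace RootedForest

lemma aux_depth_pos {V : Type} (T : RootedForest V) (v : V) : 1 ≤ T.depth v := by
  cases h : T.parent v with
  | none => rw [T.depth_root v h]
  | some u => rw [T.depth_parent v u h]; omega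

lemma aux_anc_depth_le {V : Type} (T : RootedForest V) {u v : V} (h : T.Ancestor u v) :
    T.depth u ≤ T.depth v := by
  induction h with
  | refl => exact le_rfl
  | tail _ hcu ih =>
    have := T.depth_parent _ _ hcu
    omega

lemma aux_anc_eq {V : Type} (T : RootedForest V) {u v : V} (h : T.Ancestor u v)
    (hle : T.depth v ≤ T.depth u) : u = v := by
  induction h with
  | refl => rfl
  | tail hvc hcu _ =>
    have h1 : T.depth _ ≤ T.depth v := T.aux_anc_depth_le hvc
    have h2 := T.depth_parent _ _ hcu
    omega

lemma aux_anc_comparable {V : Type} (T : RootedForest V) {u v w : V}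
    (h1 : T.Ancestor u w) (h2 : T.Ancestor v w) : T.Ancestor u v ∨ T.Ancestor v u := by
  induction h1 with
  | refl => exact Or.inr h2
  | tail _ hcu ih =>
    rcases ih with hcv | hvc
    · exact Or.inl (hcv.tail hcu)
    · rcases hvc.cases_head with heq | ⟨x, hcx, hxv⟩
      · exact Or.inl (heq ▸ Relation.ReflTransGen.single hcu)
      · rw [hcu] at hcx
        cases Option.some.inj hcx
        exact Or.inr hxv

end RootedForest

lemma aux_walk_anc {V : Type} {G : SimpleGraph V} {T : RootedForest V}
    (hT : IsTDDecomp G T) {z : V} :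
    ∀ {a b : V} (w : G.Walk a b),
      (∀ x ∈ w.support, T.depth z ≤ T.depth x) → T.Ancestor z a → T.Ancestor z b := by
  intro a b w
  induction w with
  | nil => intro _ h; exact h
  | @cons a c b hadj w ih =>
    intro hmin hza
    apply ih
    · intro x hx
      exact hmin x (by rw [SimpleGraph.Walk.support_cons]; exact List.mem_cons_of_mem _ hx)
    · rcases hT _ _ hadj with h1 | h2
      · exact Relation.ReflTransGen.trans h1 hza
      · rcases T.aux_anc_comparable hza h2 with hzc | hcz
        · exact hzc
        · have hcmem : c ∈ (SimpleGraph.Walk.cons hadj w).support := by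
            rw [SimpleGraph.Walk.support_cons]
            exact List.mem_cons_of_mem _ w.start_mem_support
          have hce : c = z := T.aux_anc_eq hcz (hmin c hcmem)
          rw [← hce]
          exact Relation.ReflTransGen.refl

lemma aux_line_walk {V : Type} {G : SimpleGraph V} {N : ℕ} (v : Fin N → V)
    (hadj : ∀ a b : Fin N, a.val + 1 = b.val → G.Adj (v a) (v b)) (a b : Fin N) :
    ∃ w : G.Walk (v a) (v b), ∀ x ∈ w.support, ∃ c, x = v c := by
  have key : ∀ t (a b : Fin N), b.val = a.val + t →
      ∃ w : G.Walk (v a) (v b), ∀ x ∈ w.support, ∃ c, x = v c := by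
    intro t
    induction t with
    | zero =>
      intro a b h
      obtain rfl : a = b := Fin.ext (by omega)
      exact ⟨SimpleGraph.Walk.nil, by intro x hx; simp at hx; exact ⟨a, hx⟩⟩
    | succ t ih =>
      intro a b h
      have ha1 : a.val + 1 < N := by have := b.isLt; omega
      obtain ⟨w, hw⟩ := ih ⟨a.val + 1, ha1⟩ b (by simp; omega)
      refine ⟨SimpleGraph.Walk.cons (hadj a ⟨a.val + 1, ha1⟩ rfl) w, ?_⟩
      intro x hx
      rw [SimpleGraph.Walk.support_cons] at hx
      rcases List.mem_cons.mp hx with h | h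
      · exact ⟨a, h⟩
      · exact hw x h
  rcases le_or_gt a.val b.val with h | h
  · exact key (b.val - a.val) a b (by omega)
  · obtain ⟨w, hw⟩ := key (a.val - b.val) b a (by omega)
    refine ⟨w.reverse, ?_⟩
    intro x hx
    rw [SimpleGraph.Walk.support_reverse] at hx
    exact hw x (List.mem_reverse.mp hx)

/-- Let `G` be obtained from the disjoint union of a graph `G'` and
the broom `B_{n,m,k}` (where `k ≥ 2n + td(G') + td(P_m × P_n)`) by adding some
edges between `V(G')` and the first grid column `{(i,1) : 1 ≤ i ≤ n}`.  If `T`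
is an optimal treedepth decomposition of `G` and `d ≥ 1` is such that (1) some
grid column is disjoint from `top(T,d)`, and (2) for every row `i` the set `V_i`
(row `i` of the grid together with the path attached to `(i,m)`) meets
`top(T,d)`, then `d ≥ n`. -/
theorem statement8 (n m k : ℕ) (hn : 0 < n) (hm : 0 < m) (hk0 : 0 < k)
    {V' : Type} [Fintype V'] (G' : SimpleGraph V')
    (hk : 2 * n + treedepth G' + treedepth (gridGraph n m) ≤ k)
    (G : SimpleGraph (V' ⊕ BroomV n m k))
    -- `G` restricted to `V'` is `G'`:
    (hG1 : ∀ u v : V', G.Adj (.inl u) (.inl v) ↔ G'.Adj u v)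
    -- `G` restricted to the broom vertices is the broom:
    (hG2 : ∀ u v : BroomV n m k, G.Adj (.inr u) (.inr v) ↔ (broom n m k).Adj u v)
    -- the added edges go between `V'` and `{(i,1) : 1 ≤ i ≤ n}`:
    (hG3 : ∀ (u : V') (b : BroomV n m k), G.Adj (.inl u) (.inr b) →
        ∃ i : Fin n, b = .inl (i, ⟨0, hm⟩))
    (T : RootedForest (V' ⊕ BroomV n m k)) (hT : IsTDDecomp G T)
    (hopt : T.height = treedepth G)
    (d : ℕ) (hd : 1 ≤ d)
    (h1 : ∃ j : Fin m, ∀ i : Fin n, (Sum.inr (Sum.inl (i, j)) : V' ⊕ BroomV n m k) ∉ T.top d)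
    (h2 : ∀ i : Fin n,
        (∃ j : Fin m, (Sum.inr (Sum.inl (i, j)) : V' ⊕ BroomV n m k) ∈ T.top d) ∨
        (∃ t : Fin (2 ^ k - 1), (Sum.inr (Sum.inr (i, t)) : V' ⊕ BroomV n m k) ∈ T.top d)) :
    n ≤ d := by
  classical
  obtain ⟨j, hj⟩ := h1
  set vG : Fin n → Fin m → (V' ⊕ BroomV n m k) :=
    fun i j' => Sum.inr (Sum.inl (i, j')) with hvGdef
  set vP : Fin n → Fin (2 ^ k - 1) → (V' ⊕ BroomV n m k) :=
    fun i t => Sum.inr (Sum.inr (i, t)) with hvPdef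
  have hpk : 0 < 2 ^ k - 1 := by
    have : 2 ^ 1 ≤ 2 ^ k := Nat.pow_le_pow_right (by norm_num) hk0
    omega
  -- adjacency lemmas
  have hadj_col : ∀ (j' : Fin m) (a b : Fin n), a.val + 1 = b.val →
      G.Adj (vG a j') (vG b j') := by
    intro j' a b hab
    rw [hvGdef]
    rw [hG2]
    rw [broom, SimpleGraph.fromRel_adj]
    constructor
    · intro hEq
      simp only [Sum.inl.injEq, Prod.mk.injEq] at hEq
      have := congrArg Fin.val hEq.1
      omega
    · left
      show Nat.dist a.val b.val + Nat.dist j'.val j'.val = 1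
      simp [Nat.dist]
      omega
  have hadj_row : ∀ (i : Fin n) (a b : Fin m), a.val + 1 = b.val →
      G.Adj (vG i a) (vG i b) := by
    intro i a b hab
    rw [hvGdef]
    rw [hG2]
    rw [broom, SimpleGraph.fromRel_adj]
    constructor
    · intro hEq
      simp only [Sum.inl.injEq, Prod.mk.injEq] at hEq
      have := congrArg Fin.val hEq.2
      omega
    · left
      show Nat.dist i.val i.val + Nat.dist a.val b.val = 1
      simp [Nat.dist]
      omega
  have hadj_tail : ∀ (i : Fin n) (a b : Fin (2 ^ k - 1)), a.val + 1 = b.val →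
      G.Adj (vP i a) (vP i b) := by
    intro i a b hab
    rw [hvPdef]
    rw [hG2]
    rw [broom, SimpleGraph.fromRel_adj]
    constructor
    · intro hEq
      simp only [Sum.inr.injEq, Prod.mk.injEq] at hEq
      have := congrArg Fin.val hEq.2
      omega
    · left
      exact ⟨rfl, hab⟩
  have hadj_bridge : ∀ (i : Fin n),
      G.Adj (vG i ⟨m - 1, by omega⟩) (vP i ⟨0, hpk⟩) := by
    intro i
    rw [hvGdef, hvPdef]
    rw [hG2]
    rw [broom, SimpleGraph.fromRel_adj]
    refine ⟨by simp, Or.inl ⟨rfl, rfl, rfl⟩⟩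
  -- walks
  have colW : ∀ a b : Fin n, ∃ w : G.Walk (vG a j) (vG b j),
      ∀ x ∈ w.support, ∃ c, x = vG c j :=
    aux_line_walk (fun i => vG i j) (fun a b h => hadj_col j a b h)
  have rowW : ∀ (i : Fin n) (a b : Fin m), ∃ w : G.Walk (vG i a) (vG i b),
      ∀ x ∈ w.support, ∃ c, x = vG i c :=
    fun i => aux_line_walk (fun j' => vG i j') (fun a b h => hadj_row i a b h)
  have tailW : ∀ (i : Fin n) (a b : Fin (2 ^ k - 1)), ∃ w : G.Walk (vP i a) (vP i b),
      ∀ x ∈ w.support, ∃ c, x = vP i c :=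
    fun i => aux_line_walk (fun t => vP i t) (fun a b h => hadj_tail i a b h)
  -- for each row, find a shallow ancestor of the column-j vertex lying in V_i
  have main : ∀ i : Fin n, ∃ z : V' ⊕ BroomV n m k,
      ((∃ j', z = vG i j') ∨ (∃ t, z = vP i t)) ∧ T.depth z ≤ d ∧
        T.Ancestor z (vG i j) := by
    intro i
    have step : ∃ a : V' ⊕ BroomV n m k, T.depth a ≤ d ∧
        ∃ w : G.Walk a (vG i j), ∀ x ∈ w.support,
          (∃ j', x = vG i j') ∨ (∃ t, x = vP i t) := by
      rcases h2 i with ⟨j₂, hj₂⟩ | ⟨t, ht⟩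
      · obtain ⟨w, hw⟩ := rowW i j₂ j
        exact ⟨vG i j₂, hj₂, w, fun x hx => Or.inl (hw x hx)⟩
      · obtain ⟨w1, hw1⟩ := tailW i t ⟨0, hpk⟩
        obtain ⟨w2, hw2⟩ := rowW i ⟨m - 1, by omega⟩ j
        refine ⟨vP i t, ht,
          w1.append (SimpleGraph.Walk.cons (hadj_bridge i).symm w2), ?_⟩
        intro x hx
        rw [SimpleGraph.Walk.mem_support_append_iff] at hx
        rcases hx with hx | hx
        · exact Or.inr (hw1 x hx)
        · rw [SimpleGraph.Walk.support_cons] at hx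
          rcases List.mem_cons.mp hx with rfl | hx
          · exact Or.inr ⟨⟨0, hpk⟩, rfl⟩
          · exact Or.inl (hw2 x hx)
    obtain ⟨a, had, w, hsupp⟩ := step
    obtain ⟨z, hzmem, hzmin⟩ := Finset.exists_min_image w.support.toFinset T.depth
      ⟨a, List.mem_toFinset.mpr w.start_mem_support⟩
    rw [List.mem_toFinset] at hzmem
    refine ⟨z, hsupp z hzmem, le_trans
      (hzmin a (List.mem_toFinset.mpr w.start_mem_support)) had, ?_⟩
    apply aux_walk_anc hT (w.dropUntil z hzmem)
    · intro x hx
      exact hzmin x (List.mem_toFinset.mpr (w.support_dropUntil_subset hzmem hx))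
    · exact Relation.ReflTransGen.refl
  choose z hzV hzd hzanc using main
  -- minimum-depth vertex of column j
  obtain ⟨i0, -, hi0⟩ := Finset.exists_min_image (Finset.univ : Finset (Fin n))
    (fun i => T.depth (vG i j)) ⟨⟨0, hn⟩, Finset.mem_univ _⟩
  have hc_anc : ∀ i : Fin n, T.Ancestor (vG i0 j) (vG i j) := by
    intro i
    obtain ⟨w, hw⟩ := colW i0 i
    apply aux_walk_anc hT w _ Relation.ReflTransGen.refl
    intro x hx
    obtain ⟨c, rfl⟩ := hw x hx
    exact hi0 c (Finset.mem_univ c)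
  have hcd : d < T.depth (vG i0 j) := by
    by_contra hcon
    exact hj i0 (by rw [hvGdef] at hcon; push_neg at hcon; exact hcon)
  have hanc_c : ∀ i : Fin n, T.Ancestor (z i) (vG i0 j) := by
    intro i
    rcases T.aux_anc_comparable (hzanc i) (hc_anc i) with h | h
    · exact h
    · exfalso
      have := T.aux_anc_depth_le h
      have := hzd i
      omega
  -- row recovery
  have hrow : ∀ (i i' : Fin n) (x : V' ⊕ BroomV n m k),
      ((∃ j', x = vG i j') ∨ (∃ t, x = vP i t)) →
      ((∃ j', x = vG i' j') ∨ (∃ t, x = vP i' t)) → i = i' := by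
    intro i i' x h h'
    rcases h with ⟨j1, rfl⟩ | ⟨t1, rfl⟩ <;> rcases h' with ⟨j2, he⟩ | ⟨t2, he⟩ <;>
      simp only [hvGdef, hvPdef, Sum.inr.injEq, Sum.inl.injEq, Prod.mk.injEq,
        reduceCtorEq] at he
    · exact he.1
    · exact he.1
  -- injectivity of depths
  have hinj : Function.Injective fun i : Fin n =>
      (⟨T.depth (z i) - 1, by
        have h1 := hzd i
        have h2 := T.aux_depth_pos (z i)
        omega⟩ : Fin d) := by
    intro i i' hEq
    have hdep : T.depth (z i) = T.depth (z i') := by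
      have h1 := T.aux_depth_pos (z i)
      have h2 := T.aux_depth_pos (z i')
      have := congrArg Fin.val hEq
      simp at this
      omega
    have hz_eq : z i = z i' := by
      rcases T.aux_anc_comparable (hanc_c i) (hanc_c i') with h | h
      · exact T.aux_anc_eq h (le_of_eq hdep.symm)
      · exact (T.aux_anc_eq h (le_of_eq hdep)).symm
    exact hrow i i' (z i) (hzV i) (hz_eq ▸ hzV i')
  have := Fintype.card_le_of_injective _ hinj
  simpa using this

end
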